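/- For every positive integer n, the sum over k from 0 to n-1 of (-1)^(n-k)/(2k+1) * C(n-1,k) * C(n+k,k) * n equals -1 if n is odd and 0 if n is even. -/

import Mathlib

open Finset

/-- Orthogonality: `∑ (-1)^k C(n,k) C(k,j) = (-1)^n [j = n]`. -/
lemma aux_orth (n j : ℕ) :
    ∑ k ∈ range (n + 1), (-1 : ℤ) ^ k * (n.choose k * k.choose j) =
      if j = n then (-1) ^ n else 0 := by
  by_cases hj : j ≤ n
  · have hsplit : ∑ k ∈ range (n + 1), (-1 : ℤ) ^ k * (n.choose k * k.choose j) =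
        ∑ k ∈ Ico j (n + 1), (-1 : ℤ) ^ k * (n.choose k * k.choose j) := by
      rw [← Finset.sum_range_add_sum_Ico _ (Nat.le_succ_of_le hj)]
      have : ∑ k ∈ range j, (-1 : ℤ) ^ k * (n.choose k * k.choose j) = 0 := by
        apply Finset.sum_eq_zero
        intro k hk
        rw [Nat.choose_eq_zero_of_lt (mem_range.mp hk)]
        ring
      rw [this, zero_add]
    rw [hsplit, Finset.sum_Ico_eq_sum_range]
    have hcalc : ∀ i ∈ range (n + 1 - j),
        (-1 : ℤ) ^ (j + i) * (n.choose (j + i) * (j + i).choose j) =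
          ((-1) ^ j * n.choose j) * ((-1) ^ i * (n - j).choose i) := by
      intro i hi
      have h1 : j ≤ j + i := Nat.le_add_right j i
      have h2 : j + i ≤ n := by
        have := mem_range.mp hi; omega
      have h3 := Nat.choose_mul (n := n) h1
      rw [Nat.add_sub_cancel_left] at h3
      have h4 := congrArg (fun x : ℕ => (x : ℤ)) h3
      push_cast at h4
      rw [pow_add]
      linear_combination ((-1 : ℤ) ^ j * (-1) ^ i) * h4
    rw [Finset.sum_congr rfl hcalc, ← Finset.mul_sum]
    have hr : n + 1 - j = (n - j) + 1 := by omega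
    rw [hr, Int.alternating_sum_range_choose]
    by_cases hjn : j = n
    · subst hjn
      simp
    · have : n - j ≠ 0 := by omega
      simp [this, hjn]
  · have h0 : ∀ k ∈ range (n + 1), (-1 : ℤ) ^ k * (n.choose k * k.choose j) = 0 := by
      intro k hk
      have : k < j := by have := mem_range.mp hk; omega
      rw [Nat.choose_eq_zero_of_lt this]
      ring
    rw [Finset.sum_eq_zero h0]
    have : j ≠ n := by omega
    simp [this]

/-- `∑ (-1)^k C(n,k) C(n+k,k) = (-1)^n`. -/
lemma aux_B (n : ℕ) :
    ∑ k ∈ range (n + 1), (-1 : ℤ) ^ k * (n.choose k * (n + k).choose k) = (-1) ^ n := by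
  have hvdm : ∀ k, ((n + k).choose k : ℤ) =
      ∑ j ∈ range (n + 1), (n.choose j * k.choose j : ℤ) := by
    intro k
    rw [Nat.add_choose_eq]
    rw [Finset.Nat.sum_antidiagonal_eq_sum_range_succ (fun a b => n.choose a * k.choose b)]
    push_cast
    have key : ∑ j ∈ range (k + 1), ((n.choose j : ℤ) * (k.choose (k - j) : ℤ)) =
        ∑ j ∈ range (k + 1), ((n.choose j : ℤ) * (k.choose j : ℤ)) := by
      apply Finset.sum_congr rfl
      intro j hj
      have hjk : j ≤ k := by have := mem_range.mp hj; omega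
      rw [Nat.choose_symm hjk]
    rw [key]
    -- now compare range (k+1) with range (n+1): terms vanish outside min
    rcases le_total k n with h | h
    · rw [← Finset.sum_range_add_sum_Ico (fun j => (n.choose j * k.choose j : ℤ))
        (Nat.succ_le_succ h)]
      have : ∑ j ∈ Ico (k + 1) (n + 1), (n.choose j * k.choose j : ℤ) = 0 := by
        apply Finset.sum_eq_zero
        intro j hj
        have : k < j := (mem_Ico.mp hj).1
        rw [Nat.choose_eq_zero_of_lt this]
        push_cast
        ring
      rw [this, add_zero]
    · rw [← Finset.sum_range_add_sum_Ico (fun j => (n.choose j * k.choose j : ℤ))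
        (Nat.succ_le_succ h)]
      have : ∑ j ∈ Ico (n + 1) (k + 1), (n.choose j * k.choose j : ℤ) = 0 := by
        apply Finset.sum_eq_zero
        intro j hj
        have : n < j := (mem_Ico.mp hj).1
        rw [Nat.choose_eq_zero_of_lt this]
        push_cast
        ring
      rw [this, add_zero]
  calc ∑ k ∈ range (n + 1), (-1 : ℤ) ^ k * (n.choose k * (n + k).choose k)
      = ∑ k ∈ range (n + 1), ∑ j ∈ range (n + 1),
          (n.choose j : ℤ) * ((-1 : ℤ) ^ k * ((n.choose k : ℤ) * (k.choose j : ℤ))) := by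
        apply Finset.sum_congr rfl
        intro k _
        rw [hvdm k]
        simp only [Finset.mul_sum]
        apply Finset.sum_congr rfl
        intro j _
        ring
    _ = ∑ j ∈ range (n + 1), (n.choose j : ℤ) *
          ∑ k ∈ range (n + 1), (-1 : ℤ) ^ k * ((n.choose k : ℤ) * (k.choose j : ℤ)) := by
        rw [Finset.sum_comm]
        apply Finset.sum_congr rfl
        intro j _
        rw [Finset.mul_sum]
    _ = (-1) ^ n := by
        rw [Finset.sum_congr rfl (fun j _ => by rw [aux_orth n j])]
        simp only [mul_ite, mul_zero]
        rw [Finset.sum_ite_eq' (range (n + 1)) n (fun j => (n.choose j : ℤ) * (-1) ^ n)]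
        simp

/-- Main integer sum. -/
lemma aux_A (n : ℕ) :
    ∑ k ∈ range n, (-1 : ℤ) ^ k * ((n + k).choose (2 * k + 1) * (2 * k).choose k) =
      if Odd n then 1 else 0 := by
  induction n with
  | zero => simp
  | succ n ih =>
    have pascal : ∀ k ∈ range (n + 1),
        (-1 : ℤ) ^ k * ((n + 1 + k).choose (2 * k + 1) * (2 * k).choose k) =
          (-1) ^ k * ((n + k).choose (2 * k + 1) * (2 * k).choose k) +
          (-1) ^ k * ((n + k).choose (2 * k) * (2 * k).choose k) := by
      intro k _
      have h : (n + 1 + k).choose (2 * k + 1) =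
          (n + k).choose (2 * k) + (n + k).choose (2 * k + 1) := by
        have : n + 1 + k = (n + k) + 1 := by omega
        rw [this, Nat.choose_succ_succ]
      rw [h]
      push_cast
      ring
    rw [Finset.sum_congr rfl pascal, Finset.sum_add_distrib]
    have h1 : ∑ k ∈ range (n + 1),
        (-1 : ℤ) ^ k * ((n + k).choose (2 * k + 1) * (2 * k).choose k) =
        ∑ k ∈ range n, (-1 : ℤ) ^ k * ((n + k).choose (2 * k + 1) * (2 * k).choose k) := by
      rw [Finset.sum_range_succ]
      have : (n + n).choose (2 * n + 1) = 0 := Nat.choose_eq_zero_of_lt (by omega)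
      rw [this]
      simp
    have h2 : ∑ k ∈ range (n + 1),
        (-1 : ℤ) ^ k * ((n + k).choose (2 * k) * (2 * k).choose k) = (-1) ^ n := by
      rw [← aux_B n]
      apply Finset.sum_congr rfl
      intro k hk
      have hk' : k ≤ n := by have := mem_range.mp hk; omega
      have := Nat.choose_mul (n := n + k) (show k ≤ 2 * k by omega)
      have hs1 : n + k - k = n := by omega
      have hs2 : 2 * k - k = k := by omega
      rw [hs1, hs2] at this
      have h4 := congrArg (fun x : ℕ => (x : ℤ)) this
      push_cast at h4
      linear_combination ((-1 : ℤ) ^ k) * h4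
    rw [h1, h2, ih]
    rcases Nat.even_or_odd n with he | ho
    · have h3 : Odd (n + 1) := Even.add_one he
      have h4 : ¬ Odd n := by simp [Nat.not_odd_iff_even, he]
      rw [if_neg h4, if_pos h3, Even.neg_one_pow he]
      ring
    · have h3 : ¬ Odd (n + 1) := by
        simp [Nat.not_odd_iff_even, Odd.add_one ho]
      rw [if_pos ho, if_neg h3, Odd.neg_one_pow ho]
      ring

theorem stmt_3 (n : ℕ) (hn : 0 < n) :
    ∑ k ∈ Finset.range n,
        (-1 : ℚ)^(n - k) / (2 * (k : ℚ) + 1) * ((n - 1).choose k) *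
          ((n + k).choose k) * (n : ℚ) =
      if Odd n then -1 else 0 := by
  have key : ∀ k ∈ range n,
      (-1 : ℚ)^(n - k) / (2 * (k : ℚ) + 1) * ((n - 1).choose k) *
          ((n + k).choose k) * (n : ℚ) =
        (-1 : ℚ) ^ n *
          (((-1 : ℤ) ^ k * ((n + k).choose (2 * k + 1) * (2 * k).choose k) : ℤ) : ℚ) := by
    intro k hk
    have hkn : k < n := mem_range.mp hk
    have hnat : n * ((n - 1).choose k * (n + k).choose k) =
        (2 * k + 1) * ((n + k).choose (2 * k + 1) * (2 * k).choose k) := by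
      obtain ⟨m, rfl⟩ : ∃ m, n = m + 1 := ⟨n - 1, by omega⟩
      simp only [Nat.add_sub_cancel]
      have hkm : k ≤ m := by omega
      have s1 : (m + 1) * m.choose k = (m + 1).choose (k + 1) * (k + 1) :=
        Nat.add_one_mul_choose_eq m k
      have s2 : (m + 1).choose (k + 1) * (k + 1) = (m + 1).choose k * (m + 1 - k) :=
        Nat.choose_succ_right_eq (m + 1) k
      have s3 : (m + 1 + k).choose (2 * k + 1) * (2 * k + 1) =
          (m + 1 + k).choose (2 * k) * (m + 1 - k) := by
        have := Nat.choose_succ_right_eq (m + 1 + k) (2 * k)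
        have e3 : m + 1 + k - 2 * k = m + 1 - k := by omega
        rwa [e3] at this
      have s4 := Nat.choose_mul (n := m + 1 + k) (show k ≤ 2 * k by omega)
      have e1 : m + 1 + k - k = m + 1 := by omega
      have e2 : 2 * k - k = k := by omega
      rw [e1, e2] at s4
      have r1 : (2 * k + 1) * ((m + 1 + k).choose (2 * k + 1) * (2 * k).choose k) =
          ((m + 1 + k).choose (2 * k + 1) * (2 * k + 1)) * (2 * k).choose k := by ring
      rw [r1, s3]
      have r2 : (m + 1 + k).choose (2 * k) * (m + 1 - k) * (2 * k).choose k =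
          ((m + 1 + k).choose (2 * k) * (2 * k).choose k) * (m + 1 - k) := by ring
      rw [r2, s4]
      have r3 : (m + 1) * (m.choose k * (m + 1 + k).choose k) =
          ((m + 1) * m.choose k) * (m + 1 + k).choose k := by ring
      rw [r3, s1, s2]
      ring
    have hsub : n - 1 = n - 1 := rfl
    have hne : (2 * (k : ℚ) + 1) ≠ 0 := by positivity
    have hcast : (n : ℚ) * ((n - 1).choose k) * ((n + k).choose k) =
        (2 * (k : ℚ) + 1) * (((n + k).choose (2 * k + 1) : ℚ) * ((2 * k).choose k)) := by
      have := congrArg (fun x : ℕ => (x : ℚ)) hnat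
      push_cast at this
      linarith [this]
    have hsign : (-1 : ℚ) ^ (n - k) = (-1) ^ n * (-1) ^ k := by
      have h1 : (-1 : ℚ) ^ n = (-1) ^ (n - k) * (-1) ^ k := by
        rw [← pow_add]
        congr 1
        omega
      have h2 : ((-1 : ℚ) ^ k) * ((-1) ^ k) = 1 := by
        rw [← pow_add]
        exact Even.neg_one_pow ⟨k, rfl⟩
      calc (-1 : ℚ) ^ (n - k) = (-1) ^ (n - k) * ((-1) ^ k * (-1) ^ k) := by rw [h2, mul_one]
        _ = ((-1) ^ (n - k) * (-1) ^ k) * (-1) ^ k := by ring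
        _ = (-1) ^ n * (-1) ^ k := by rw [← h1]
    rw [div_mul_eq_mul_div, div_mul_eq_mul_div, div_mul_eq_mul_div, div_eq_iff hne]
    push_cast
    rw [hsign]
    linear_combination ((-1 : ℚ) ^ n * (-1) ^ k) * hcast
  rw [Finset.sum_congr rfl key, ← Finset.mul_sum, ← Int.cast_sum, aux_A n]
  rcases Nat.even_or_odd n with he | ho
  · have h4 : ¬ Odd n := by simp [Nat.not_odd_iff_even, he]
    simp [h4]
  · simp [ho, Odd.neg_one_pow ho]
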